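/- Let A_1, …, A_k be pairwise commuting N×N matrices with nonnegative integer entries and no zero rows forming an irreducible family, let ρ_i be the spectral radius of A_i, suppose ρ_i > 1 for all i, let x be the unimodular Perron–Frobenius eigenvector, and fix δ ∈ (0,1). Then the following are equivalent: (i) for every finite path λ ∈ FB, w_δ(λ) equals the d_δ-diameter of the cylinder set [λ], i.e., w_δ(λ) = sup{d_δ(x,y) : x, y ∈ [λ]}; (ii) every row sum of every A_i is at least 2, i.e., Σ_b A_i(a,b) ≥ 2 for all a ∈ {1,…,N} and all 1 ≤ i ≤ k. -/

import Mathlib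

open scoped Classical ENNReal Topology
open TopologicalSpace MeasureTheory Filter Set
open Fin.NatCast

namespace KBratteli

variable (k N : ℕ) [NeZero k] (A : Fin k → Matrix (Fin N) (Fin N) ℕ)

/-- An edge at level `n` of the stationary `k`-Bratteli diagram of the matrices
`A 0, …, A (k-1)`: an element of `Edge k N A n` is an edge whose source lies in the
level-`(n+1)` vertex set and whose range lies in the level-`n` vertex set (both copies of
`Fin N`); there are exactly `A (n % k) p q` edges with range `p` and source `q`. -/
structure Edge (n : ℕ) : Type where
  rg : Fin N
  src : Fin N
  idx : Fin (A (n : Fin k) rg src)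

/-- The infinite path space `X_B` of the stationary `k`-Bratteli diagram of `A`. -/
def PathSpace : Type :=
  { x : (n : ℕ) → Edge k N A n // ∀ n, (x n).src = (x (n + 1)).rg }

/-- A finite path of length `ℓ` beginning at level `0`: a composable string of edges,
together with the vertices it visits.  Length-`0` paths are vertices of `V₀`. -/
structure FinPath (ℓ : ℕ) : Type where
  vtx : Fin (ℓ + 1) → Fin N
  edge : (i : Fin ℓ) → Edge k N A i
  rg_eq : ∀ i : Fin ℓ, (edge i).rg = vtx i.castSucc
  src_eq : ∀ i : Fin ℓ, (edge i).src = vtx i.succ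

/-- `FB`: the set of all finite paths (of all lengths) beginning at level `0`. -/
abbrev FB : Type := Σ ℓ : ℕ, FinPath k N A ℓ

variable {k N A}

/-- The source (final) vertex of a finite path. -/
def FinPath.src {ℓ : ℕ} (lam : FinPath k N A ℓ) : Fin N := lam.vtx (Fin.last ℓ)

/-- The range (initial, level-0) vertex of a finite path. -/
def FinPath.rg {ℓ : ℕ} (lam : FinPath k N A ℓ) : Fin N := lam.vtx 0

/-- The length-0 finite path at the level-0 vertex `v`. -/
def vertexPath (v : Fin N) : FinPath k N A 0 where
  vtx := fun _ => v
  edge := fun i => i.elim0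
  rg_eq := fun i => i.elim0
  src_eq := fun i => i.elim0

/-- The cylinder set `[λ]` of a finite path `λ`: all infinite paths with initial
segment `λ`. -/
def Cyl {ℓ : ℕ} (lam : FinPath k N A ℓ) : Set (PathSpace k N A) :=
  { x | (x.1 0).rg = lam.rg ∧ ∀ i : Fin ℓ, x.1 i = lam.edge i }

variable (k N A) in
/-- The collection of all cylinder sets. -/
def cylinderSets : Set (Set (PathSpace k N A)) :=
  { S | ∃ (ℓ : ℕ) (lam : FinPath k N A ℓ), S = Cyl lam }

/-- The cylinder-set topology on the infinite path space. -/
instance : TopologicalSpace (PathSpace k N A) :=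
  generateFrom (cylinderSets k N A)

/-- The Borel σ-algebra of the cylinder-set topology. -/
instance : MeasurableSpace (PathSpace k N A) := borel _

instance : BorelSpace (PathSpace k N A) := ⟨rfl⟩

lemma isOpen_cyl {ℓ : ℕ} (lam : FinPath k N A ℓ) : IsOpen (Cyl lam) :=
  isOpen_generateFrom_of_mem ⟨ℓ, lam, rfl⟩

lemma measurableSet_cyl {ℓ : ℕ} (lam : FinPath k N A ℓ) : MeasurableSet (Cyl lam) :=
  (isOpen_cyl lam).measurableSet

/-- Edges form a finite type. -/
def edgeEquiv (n : ℕ) : Edge k N A n ≃ Σ p : Fin N, Σ q : Fin N, Fin (A (n : Fin k) p q) where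
  toFun e := ⟨e.rg, e.src, e.idx⟩
  invFun t := ⟨t.1, t.2.1, t.2.2⟩
  left_inv e := rfl
  right_inv t := rfl

instance (n : ℕ) : Finite (Edge k N A n) := by
  have : ∀ p, Finite (Σ q : Fin N, Fin (A (n : Fin k) p q)) := fun p => Finite.instSigma
  have : Finite (Σ p : Fin N, Σ q : Fin N, Fin (A (n : Fin k) p q)) := Finite.instSigma
  exact Finite.of_equiv _ (edgeEquiv n).symm

instance (ℓ : ℕ) : Finite (FinPath k N A ℓ) := by
  have hinj : Function.Injective
      (fun lam : FinPath k N A ℓ => (lam.vtx, lam.edge)) := by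
    rintro ⟨v, e, h1, h2⟩ ⟨v', e', h1', h2'⟩ h
    simp only [Prod.mk.injEq] at h
    obtain ⟨hv, he⟩ := h
    subst hv; subst he; rfl
  exact Finite.of_injective _ hinj

instance : Countable (FB k N A) := by infer_instance

/-- The initial segment of length `m` of an infinite path. -/
def prefixPath (x : PathSpace k N A) (m : ℕ) : FinPath k N A m where
  vtx := fun i => (x.1 i).rg
  edge := fun i => x.1 i
  rg_eq := fun _ => rfl
  src_eq := fun i => x.2 i

lemma mem_cyl_prefixPath (x : PathSpace k N A) (m : ℕ) : x ∈ Cyl (prefixPath x m) :=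
  ⟨rfl, fun _ => rfl⟩

lemma measurableSet_coord (j : ℕ) (P : Edge k N A j → Prop) :
    MeasurableSet { x : PathSpace k N A | P (x.1 j) } := by
  have h : { x : PathSpace k N A | P (x.1 j) }
      = ⋃ (lam : FinPath k N A (j + 1)) (_ : P (lam.edge (Fin.last j))), Cyl lam := by
    ext x
    simp only [Set.mem_setOf_eq, Set.mem_iUnion]
    constructor
    · intro hx
      exact ⟨prefixPath x (j + 1), hx, mem_cyl_prefixPath x (j + 1)⟩
    · rintro ⟨lam, hP, -, hedge⟩
      have hx : x.1 j = lam.edge (Fin.last j) := hedge (Fin.last j)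
      rw [hx]; exact hP
  rw [h]
  exact MeasurableSet.iUnion fun lam => MeasurableSet.iUnion fun _ => measurableSet_cyl lam

/-- The first level at which two infinite paths differ. -/
noncomputable def firstDiff (x y : PathSpace k N A) : ℕ := sInf { n | x.1 n ≠ y.1 n }

/-- The function `d_w` associated to a weight-type function `w` on finite paths:
`d_w(x,x) = 0`; `d_w(x,y) = 1` if `x` and `y` have no common initial sub-path (i.e. they
do not even start at the same level-0 vertex); and otherwise `d_w(x,y) = w(x ∧ y)`, the
value of `w` on the longest common initial sub-path of `x` and `y`. -/
noncomputable def distW (w : FB k N A → ℝ) (x y : PathSpace k N A) : ℝ :=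
  if x = y then 0
  else if (x.1 0).rg = (y.1 0).rg then w ⟨firstDiff x y, prefixPath x (firstDiff x y)⟩
  else 1

/-- `η` is an (initial) sub-path of `λ`. -/
def IsSubPath {m ℓ : ℕ} (η : FinPath k N A m) (lam : FinPath k N A ℓ) : Prop :=
  ∃ h : m ≤ ℓ, η.rg = lam.rg ∧ ∀ i : Fin m, η.edge i = lam.edge (Fin.castLE h i)

/-- `lam ∈ F_γ B` : the finite path `lam` extends `γ`. -/
def Extends {m : ℕ} (γ : FinPath k N A m) (lam : FB k N A) : Prop :=
  IsSubPath γ lam.2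

/-- The spectral radius of a matrix of nonnegative integers, as a real number. -/
noncomputable def specRad {N : ℕ} (M : Matrix (Fin N) (Fin N) ℕ) : ℝ :=
  (spectralRadius ℂ (M.map (Nat.cast : ℕ → ℂ))).toReal

/-- The weight `w_δ` on the stationary `k`-Bratteli diagram of `A`, relative to data
`ρ : Fin k → ℝ` (the spectral radii) and `xv : Fin N → ℝ` (the Perron–Frobenius
eigenvector): on a path `η` of length `q·k + t` (`0 ≤ t ≤ k-1`) it is
`(ρ₁^{q+1} ⋯ ρ_t^{q+1} · ρ_{t+1}^q ⋯ ρ_k^q)^{-1/δ} · xv (s η)`. -/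
noncomputable def wt (δ : ℝ) (ρ : Fin k → ℝ) (xv : Fin N → ℝ) (lam : FB k N A) : ℝ :=
  (∏ i : Fin k, ρ i ^ (if (i : ℕ) < lam.1 % k then lam.1 / k + 1 else lam.1 / k))
      ^ (-(1 / δ)) * xv lam.2.src

/-- The value `M([λ]) = (ρ₁⋯ρ_t)^{-(q+1)} (ρ_{t+1}⋯ρ_k)^{-q} · x_{s(λ)}` of the
measure `M` on the cylinder set of a path of length `q·k + t`. -/
noncomputable def Mval (ρ : Fin k → ℝ) (xv : Fin N → ℝ) (lam : FB k N A) : ℝ :=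
  (∏ i : Fin k, ρ i ^ (if (i : ℕ) < lam.1 % k then lam.1 / k + 1 else lam.1 / k))⁻¹
    * xv lam.2.src

/-- A family of matrices is irreducible if for every pair of indices some finite product
of matrices from the family has positive corresponding entry. -/
def IrreducibleFamily {k N : ℕ} (A : Fin k → Matrix (Fin N) (Fin N) ℕ) : Prop :=
  ∀ a b : Fin N, ∃ l : List (Fin k), 0 < (l.map A).prod a b

/-- A single square matrix with nonnegative integer entries is irreducible if for every
pair of indices some positive power has positive corresponding entry. -/
def MatIrreducible {N : ℕ} (B : Matrix (Fin N) (Fin N) ℕ) : Prop :=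
  ∀ a b : Fin N, ∃ m : ℕ, 0 < m ∧ 0 < (B ^ m) a b

/-- The diameter (in `ℝ≥0∞`) of a set of infinite paths relative to `d_w`. -/
noncomputable def diamW (w : FB k N A → ℝ) (U : Set (PathSpace k N A)) : ℝ≥0∞ :=
  ⨆ (x) (_ : x ∈ U) (y) (_ : y ∈ U), ENNReal.ofReal (distW w x y)

/-- The `t`-dimensional Hausdorff (outer) measure of a set `Z` relative to the metric
`d_w`: `H^t(Z) = lim_{ε → 0} inf { Σᵢ (diam Uᵢ)^t : Z ⊆ ⋃ᵢ Uᵢ, diam Uᵢ < ε }`. -/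
noncomputable def hausW (w : FB k N A → ℝ) (t : ℝ) (Z : Set (PathSpace k N A)) : ℝ≥0∞ :=
  ⨆ (ε : ℝ≥0∞) (_ : 0 < ε),
    ⨅ (U : ℕ → Set (PathSpace k N A)) (_ : Z ⊆ ⋃ n, U n)
      (_ : ∀ n, diamW w (U n) < ε), ∑' n, diamW w (U n) ^ t

lemma natCast_mul_add (n i : ℕ) : ((n * k + i : ℕ) : Fin k) = (i : Fin k) := by
  push_cast
  simp [Fin.natCast_self]

/-- Transport of edges between levels governed by the same matrix (the diagram is
stationary with period `k`). -/
def Edge.cast {i j : ℕ} (h : (i : Fin k) = (j : Fin k)) (e : Edge k N A i) :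
    Edge k N A j where
  rg := e.rg
  src := e.src
  idx := Fin.cast (by rw [h]) e.idx

/-- The cylinder set `[γ e]` of a finite path `γ` (of length `m`) extended by one
further edge `e` at level `m`. -/
def cylExt {m : ℕ} (γ : FinPath k N A m) (e : Edge k N A m) : Set (PathSpace k N A) :=
  Cyl γ ∩ { x | x.1 m = e }

lemma measurableSet_cylExt {m : ℕ} (γ : FinPath k N A m) (e : Edge k N A m) :
    MeasurableSet (cylExt γ e) :=
  (measurableSet_cyl γ).inter (measurableSet_coord m fun f => f = e)

/-- The cylinder set `[λ μ]` of the concatenation of `λ ∈ F^{nk}B` with `μ ∈ F^{k}B`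
(the diagram being stationary of period `k`, `μ` concatenates onto `λ`). -/
def cylCat {n : ℕ} (lam : FinPath k N A (n * k)) (η : FinPath k N A k) :
    Set (PathSpace k N A) :=
  Cyl lam ∩ { x | (x.1 (n * k)).rg = η.rg } ∩
    ⋂ i : Fin k,
      { x | x.1 (n * k + (i : ℕ)) = Edge.cast (natCast_mul_add n (i : ℕ)).symm (η.edge i) }

lemma measurableSet_cylCat {n : ℕ} (lam : FinPath k N A (n * k)) (η : FinPath k N A k) :
    MeasurableSet (cylCat lam η) :=
  ((measurableSet_cyl lam).inter
      (measurableSet_coord (n * k) (fun e => e.rg = η.rg))).inter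
    (MeasurableSet.iInter fun i => measurableSet_coord (n * k + (i : ℕ))
      (fun e => e = Edge.cast (natCast_mul_add n (i : ℕ)).symm (η.edge i)))



end KBratteli

namespace KBratteli


section Aux

variable {k N : ℕ} [NeZero k] {A : Fin k → Matrix (Fin N) (Fin N) ℕ}

/-- Commuting + no zero rows + irreducible implies no zero columns. -/
lemma no_zero_col [NeZero N]
    (hcomm : ∀ i j, A i * A j = A j * A i)
    (hrow : ∀ (i : Fin k) (a : Fin N), ∃ b, 0 < A i a b)
    (hirr : IrreducibleFamily A) (j : Fin k) (c : Fin N) :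
    ∃ b, 0 < A j b c := by
  by_contra hc
  push_neg at hc
  have hc0 : ∀ b, A j b c = 0 := fun b => Nat.le_zero.mp (hc b)
  set Z : Set (Fin N) := {d | ∀ b, A j b d = 0} with hZ
  have hcZ : c ∈ Z := hc0
  have key : ∀ d ∈ Z, ∀ (m : Fin k) (b : Fin N), b ∉ Z → A m b d = 0 := by
    intro d hd m b hb
    by_contra hpos
    have hb' : ∃ r, 0 < A j r b := by
      by_contra h
      push_neg at h
      exact hb fun r => Nat.le_zero.mp (h r)
    obtain ⟨r, hr⟩ := hb'
    have hzero : (A j * A m) r d = 0 := by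
      have hcm : (A j * A m) r d = (A m * A j) r d :=
        congrArg (fun M : Matrix (Fin N) (Fin N) ℕ => M r d) (hcomm j m)
      rw [hcm, Matrix.mul_apply]
      exact Finset.sum_eq_zero fun y _ => by rw [hd y, mul_zero]
    rw [Matrix.mul_apply] at hzero
    have hx := Finset.sum_eq_zero_iff.mp hzero b (Finset.mem_univ b)
    rcases Nat.mul_eq_zero.mp hx with h | h
    · omega
    · exact hpos h
  have prodzero : ∀ l : List (Fin k), ∀ d ∈ Z, ∀ b : Fin N, b ∉ Z →
      (l.map A).prod b d = 0 := by
    intro l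
    induction l with
    | nil =>
      intro d hd b hb
      have hbd : b ≠ d := fun h => hb (h ▸ hd)
      simp [Matrix.one_apply_ne hbd]
    | cons m l ih =>
      intro d hd b hb
      rw [List.map_cons, List.prod_cons, Matrix.mul_apply]
      refine Finset.sum_eq_zero fun y _ => ?_
      by_cases hy : y ∈ Z
      · rw [key y hy m b hb, zero_mul]
      · rw [ih d hd y hy, mul_zero]
  have a0 : Fin N := ⟨0, Nat.pos_of_ne_zero (NeZero.ne N)⟩
  obtain ⟨b, hbpos⟩ := hrow j a0
  have hbZ : b ∉ Z := fun h => by have := h a0; omega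
  obtain ⟨l, hl⟩ := hirr b c
  rw [prodzero l c hcZ b hbZ] at hl
  exact lt_irrefl 0 hl

/-- Every vertex is the source of a finite path of any given length. -/
lemma exists_finpath_src
    (hcol : ∀ (j : Fin k) (c : Fin N), ∃ b, 0 < A j b c)
    (a : Fin N) (ℓ : ℕ) :
    ∃ lam : FinPath k N A ℓ, lam.src = a := by
  choose pre hpre using fun (m : ℕ) (v : Fin N) => hcol ((m : Fin k)) v
  let g : ℕ → Fin N := fun t => Nat.rec a (fun t' vt => pre (ℓ - (t' + 1)) vt) t
  have hg : ∀ t, g (t + 1) = pre (ℓ - (t + 1)) (g t) := fun t => rfl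
  have pos : ∀ i : Fin ℓ, 0 < A ((i : ℕ) : Fin k) (g (ℓ - (i : ℕ))) (g (ℓ - ((i : ℕ) + 1))) := by
    intro i
    have hi : (i : ℕ) < ℓ := i.isLt
    have h1 : ℓ - (i : ℕ) = (ℓ - ((i : ℕ) + 1)) + 1 := by omega
    rw [h1, hg]
    have h2 : ℓ - ((ℓ - ((i : ℕ) + 1)) + 1) = (i : ℕ) := by omega
    rw [h2]
    exact hpre (i : ℕ) _
  refine ⟨⟨fun m => g (ℓ - (m : ℕ)),
    fun i => ⟨g (ℓ - (i : ℕ)), g (ℓ - ((i : ℕ) + 1)), ⟨0, pos i⟩⟩,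
    fun i => rfl, fun i => rfl⟩, ?_⟩
  show g (ℓ - ℓ) = a
  rw [Nat.sub_self]
  rfl


/-- Any finite path, extended by a prescribed edge, embeds in an infinite path. -/
lemma exists_mem_cyl_edge
    (hrow : ∀ (i : Fin k) (a : Fin N), ∃ b, 0 < A i a b)
    {ℓ : ℕ} (lam : FinPath k N A ℓ) (e : Edge k N A ℓ) (he : e.rg = lam.src) :
    ∃ p : PathSpace k N A, p ∈ Cyl lam ∧ p.1 ℓ = e := by
  choose nxt hnxt using fun (m : ℕ) (v : Fin N) => hrow ((m : Fin k)) v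
  let v : ℕ → Fin N := fun n => Nat.rec (lam.vtx 0)
    (fun n' vn => if h : n' + 1 ≤ ℓ then lam.vtx ⟨n' + 1, Nat.lt_succ_of_le h⟩
      else if h2 : n' = ℓ then e.src else nxt n' vn) n
  have hv_le : ∀ n, ∀ h : n ≤ ℓ, v n = lam.vtx ⟨n, Nat.lt_succ_of_le h⟩ := by
    intro n h
    cases n with
    | zero => rfl
    | succ m =>
      show (if h : m + 1 ≤ ℓ then lam.vtx ⟨m + 1, Nat.lt_succ_of_le h⟩
        else if h2 : m = ℓ then e.src else nxt m (v m)) = _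
      rw [dif_pos h]
  have hv_succl : v (ℓ + 1) = e.src := by
    show (if h : ℓ + 1 ≤ ℓ then lam.vtx ⟨ℓ + 1, Nat.lt_succ_of_le h⟩
      else if h2 : ℓ = ℓ then e.src else nxt ℓ (v ℓ)) = _
    rw [dif_neg (by omega), dif_pos rfl]
  have hv_big : ∀ n, ℓ < n → v (n + 1) = nxt n (v n) := by
    intro n hn
    show (if h : n + 1 ≤ ℓ then lam.vtx ⟨n + 1, Nat.lt_succ_of_le h⟩
      else if h2 : n = ℓ then e.src else nxt n (v n)) = _
    rw [dif_neg (by omega), dif_neg (by omega)]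
  have pos_big : ∀ n, ℓ < n → 0 < A ((n : ℕ) : Fin k) (v n) (v (n + 1)) := by
    intro n hn
    rw [hv_big n hn]
    exact hnxt n (v n)
  let p1 : ∀ n, Edge k N A n := fun n =>
    if h : n < ℓ then lam.edge ⟨n, h⟩
    else if h2 : n = ℓ then cast (by rw [h2]) e
    else ⟨v n, v (n + 1), ⟨0, pos_big n (by omega)⟩⟩
  have hp1_lt : ∀ (n : ℕ) (h : n < ℓ), p1 n = lam.edge ⟨n, h⟩ := by
    intro n h
    show dite _ _ _ = _
    rw [dif_pos h]
  have hp1_l : p1 ℓ = e := by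
    show dite _ _ _ = _
    rw [dif_neg (lt_irrefl ℓ), dif_pos rfl]
    exact eq_of_heq (cast_heq _ _)
  have hp1_big : ∀ n (hn : ℓ < n), p1 n = ⟨v n, v (n + 1), ⟨0, pos_big n hn⟩⟩ := by
    intro n hn
    show dite _ _ _ = _
    rw [dif_neg (by omega), dif_neg (by omega)]
  have hrg : ∀ n, (p1 n).rg = v n := by
    intro n
    rcases lt_trichotomy n ℓ with h | h | h
    · rw [hp1_lt n h, lam.rg_eq ⟨n, h⟩, hv_le n (le_of_lt h)]
      rfl
    · subst h
      rw [hp1_l, he, hv_le n le_rfl]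
      rfl
    · rw [hp1_big n h]
  have hsrc : ∀ n, (p1 n).src = v (n + 1) := by
    intro n
    rcases lt_trichotomy n ℓ with h | h | h
    · rw [hp1_lt n h, lam.src_eq ⟨n, h⟩, hv_le (n + 1) h]
      rfl
    · subst h
      rw [hp1_l, hv_succl]
    · rw [hp1_big n h]
  refine ⟨⟨p1, fun n => by rw [hsrc n, hrg (n + 1)]⟩, ⟨?_, ?_⟩, hp1_l⟩
  · rw [hrg 0]
    rfl
  · intro i
    have := hp1_lt (i : ℕ) i.isLt
    simpa using this


/-- The level-dependent factor in the weight `w_δ`. -/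
noncomputable def Cfac (k : ℕ) (δ : ℝ) (ρ : Fin k → ℝ) (n : ℕ) : ℝ :=
  (∏ i : Fin k, ρ i ^ (if (i : ℕ) < n % k then n / k + 1 else n / k)) ^ (-(1 / δ))

lemma wt_eq {δ : ℝ} {ρ : Fin k → ℝ} {xv : Fin N → ℝ} {ℓ : ℕ} (lam : FinPath k N A ℓ) :
    wt δ ρ xv ⟨ℓ, lam⟩ = Cfac k δ ρ ℓ * xv lam.src := rfl

lemma prod_exp_succ {ρ : Fin k → ℝ} (n : ℕ) :
    (∏ i : Fin k, ρ i ^ (if (i : ℕ) < (n + 1) % k then (n + 1) / k + 1 else (n + 1) / k))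
      = (∏ i : Fin k, ρ i ^ (if (i : ℕ) < n % k then n / k + 1 else n / k))
          * ρ ((n : Fin k)) := by
  have hk : 0 < k := Nat.pos_of_ne_zero (NeZero.ne k)
  have hE : ∀ i : Fin k,
      (if (i : ℕ) < (n + 1) % k then (n + 1) / k + 1 else (n + 1) / k)
        = (if (i : ℕ) < n % k then n / k + 1 else n / k)
          + (if i = (n : Fin k) then 1 else 0) := by
    obtain ⟨q, r, hrk, rfl⟩ : ∃ q r, r < k ∧ n = k * q + r :=
      ⟨n / k, n % k, Nat.mod_lt _ hk, (Nat.div_add_mod n k).symm⟩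
    have hm : (k * q + r) % k = r := by
      rw [Nat.mul_add_mod]; exact Nat.mod_eq_of_lt hrk
    have hd : (k * q + r) / k = q := by
      rw [Nat.mul_add_div hk, Nat.div_eq_of_lt hrk, Nat.add_zero]
    have hra : k * q + r + 1 = k * q + (r + 1) := by omega
    have hm1 : (k * q + r + 1) % k = if r + 1 = k then 0 else r + 1 := by
      rw [hra, Nat.mul_add_mod]
      split
      · next h => rw [h, Nat.mod_self]
      · next h => exact Nat.mod_eq_of_lt (by omega)
    have hd1 : (k * q + r + 1) / k = if r + 1 = k then q + 1 else q := by
      rw [hra, Nat.mul_add_div hk]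
      split
      · next h => rw [h, Nat.div_self hk]
      · next h => rw [Nat.div_eq_of_lt (by omega), Nat.add_zero]
    intro i
    have hiff : (i = ((k * q + r : ℕ) : Fin k)) ↔ (i : ℕ) = r := by
      rw [Fin.ext_iff, Fin.val_natCast, hm]
    rw [hm, hd, hm1, hd1]
    by_cases hir : (i : ℕ) = r
    · rw [if_pos (hiff.mpr hir)]
      have hik : (i : ℕ) < k := i.isLt
      split_ifs <;> omega
    · rw [if_neg (fun h => hir (hiff.mp h))]
      have hik : (i : ℕ) < k := i.isLt
      split_ifs <;> omega
  calc (∏ i : Fin k, ρ i ^ (if (i : ℕ) < (n + 1) % k then (n + 1) / k + 1 else (n + 1) / k))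
      = ∏ i : Fin k, (ρ i ^ (if (i : ℕ) < n % k then n / k + 1 else n / k)
          * ρ i ^ (if i = (n : Fin k) then 1 else 0)) := by
        refine Finset.prod_congr rfl fun i _ => ?_
        rw [← pow_add, ← hE i]
    _ = (∏ i : Fin k, ρ i ^ (if (i : ℕ) < n % k then n / k + 1 else n / k))
          * ∏ i : Fin k, ρ i ^ (if i = (n : Fin k) then 1 else 0) := by
        rw [Finset.prod_mul_distrib]
    _ = _ := by
        congr 1
        have : ∀ i : Fin k, ρ i ^ (if i = (n : Fin k) then 1 else 0)
            = (if i = (n : Fin k) then ρ i else 1) := by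
          intro i; split_ifs <;> simp
        rw [Finset.prod_congr rfl fun i _ => this i, Finset.prod_ite_eq']
        simp

lemma Cfac_pos {δ : ℝ} {ρ : Fin k → ℝ} (hρ : ∀ i, 0 < ρ i) (n : ℕ) :
    0 < Cfac k δ ρ n :=
  Real.rpow_pos_of_pos (Finset.prod_pos fun i _ => pow_pos (hρ i) _) _

lemma Cfac_succ {δ : ℝ} {ρ : Fin k → ℝ} (hρ : ∀ i, 0 < ρ i) (n : ℕ) :
    Cfac k δ ρ (n + 1) = Cfac k δ ρ n * (ρ ((n : Fin k))) ^ (-(1 / δ)) := by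
  unfold Cfac
  rw [prod_exp_succ]
  exact Real.mul_rpow (Finset.prod_nonneg fun i _ => pow_nonneg (hρ i).le _) (hρ _).le

lemma wt_pos {δ : ℝ} {ρ : Fin k → ℝ} {xv : Fin N → ℝ} (hρ : ∀ i, 0 < ρ i)
    (hx : ∀ v, 0 < xv v) {ℓ : ℕ} (lam : FinPath k N A ℓ) :
    0 < wt δ ρ xv ⟨ℓ, lam⟩ :=
  mul_pos (Cfac_pos hρ ℓ) (hx _)

lemma src_prefixPath (p : PathSpace k N A) (n : ℕ) :
    (prefixPath p n).src = (p.1 n).rg := rfl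

lemma wt_prefix_succ_le {δ : ℝ} {ρ : Fin k → ℝ} {x : Fin N → ℝ}
    (hρone : ∀ i, 1 < ρ i) (hxpos : ∀ v, 0 < x v)
    (hxeig : ∀ i, ((A i).map (Nat.cast : ℕ → ℝ)).mulVec x = ρ i • x)
    (hδ : δ ∈ Set.Ioo (0 : ℝ) 1) (p : PathSpace k N A) (n : ℕ) :
    wt δ ρ x ⟨n + 1, prefixPath p (n + 1)⟩
      ≤ ρ ((n : Fin k)) ^ ((1 : ℝ) - 1 / δ) * wt δ ρ x ⟨n, prefixPath p n⟩ := by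
  have hρpos : ∀ i, 0 < ρ i := fun i => lt_trans one_pos (hρone i)
  set i : Fin k := (n : Fin k) with hi
  set a : Fin N := (p.1 n).rg with hada
  set b : Fin N := (p.1 n).src with hbdb
  have hAe : 0 < A i a b := (p.1 n).idx.pos
  have hsum : ∑ c, ((A i a c : ℝ)) * x c = ρ i * x a := by
    have := congrFun (hxeig i) a
    simpa [Matrix.mulVec, dotProduct, Matrix.map_apply] using this
  have hxb : x b ≤ ρ i * x a := by
    rw [← hsum]
    calc x b ≤ (A i a b : ℝ) * x b := by
          have h1 : (1 : ℝ) ≤ (A i a b : ℝ) := by exact_mod_cast hAe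
          nlinarith [hxpos b]
      _ ≤ ∑ c, ((A i a c : ℝ)) * x c :=
          Finset.single_le_sum (f := fun c => ((A i a c : ℝ)) * x c)
            (fun c _ => mul_nonneg (Nat.cast_nonneg _) (hxpos c).le)
            (Finset.mem_univ b)
  have hsrc1 : (prefixPath p (n + 1)).src = b := (p.2 n).symm
  have hsrc0 : (prefixPath p n).src = a := rfl
  rw [wt_eq, wt_eq, hsrc1, hsrc0, Cfac_succ hρpos]
  have heq : ρ i ^ ((1 : ℝ) - 1 / δ) = ρ i ^ (-(1 / δ)) * ρ i := by
    rw [show (1 : ℝ) - 1 / δ = -(1 / δ) + 1 by ring, Real.rpow_add (hρpos i),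
      Real.rpow_one]
  have h1 : Cfac k δ ρ n * ρ i ^ (-(1 / δ)) * x b
      ≤ Cfac k δ ρ n * ρ i ^ (-(1 / δ)) * (ρ i * x a) := by
    exact mul_le_mul_of_nonneg_left hxb
      (mul_nonneg (Cfac_pos hρpos n).le (Real.rpow_nonneg (hρpos i).le _))
  calc Cfac k δ ρ n * ρ i ^ (-(1 / δ)) * x b
      ≤ Cfac k δ ρ n * ρ i ^ (-(1 / δ)) * (ρ i * x a) := h1
    _ = ρ i ^ ((1 : ℝ) - 1 / δ) * (Cfac k δ ρ n * x a) := by rw [heq]; ring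

lemma rpow_exp_lt_one {δ ri : ℝ} (hρ : 1 < ri) (hδ : δ ∈ Set.Ioo (0 : ℝ) 1) :
    ri ^ ((1 : ℝ) - 1 / δ) < 1 := by
  apply Real.rpow_lt_one_of_one_lt_of_neg hρ
  have : 1 < 1 / δ := (one_lt_one_div hδ.1 hδ.2)
  linarith

lemma wt_prefix_mono {δ : ℝ} {ρ : Fin k → ℝ} {x : Fin N → ℝ}
    (hρone : ∀ i, 1 < ρ i) (hxpos : ∀ v, 0 < x v)
    (hxeig : ∀ i, ((A i).map (Nat.cast : ℕ → ℝ)).mulVec x = ρ i • x)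
    (hδ : δ ∈ Set.Ioo (0 : ℝ) 1) (p : PathSpace k N A) {ℓ m : ℕ} (h : ℓ ≤ m) :
    wt δ ρ x ⟨m, prefixPath p m⟩ ≤ wt δ ρ x ⟨ℓ, prefixPath p ℓ⟩ := by
  have hρpos : ∀ i, 0 < ρ i := fun i => lt_trans one_pos (hρone i)
  induction m, h using Nat.le_induction with
  | base => exact le_rfl
  | succ m hm ih =>
    refine le_trans (le_trans (wt_prefix_succ_le hρone hxpos hxeig hδ p m) ?_) ih
    have hθ : ρ ((m : Fin k)) ^ ((1 : ℝ) - 1 / δ) ≤ 1 :=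
      (rpow_exp_lt_one (hρone _) hδ).le
    have := wt_pos (δ := δ) hρpos hxpos (prefixPath p m)
    nlinarith


lemma rg_level_eq {ℓ : ℕ} {lam : FinPath k N A ℓ} {p : PathSpace k N A}
    (hp : p ∈ Cyl lam) : (p.1 ℓ).rg = lam.src := by
  cases ℓ with
  | zero =>
    have h0 : (0 : Fin 1) = Fin.last 0 := Subsingleton.elim _ _
    have := hp.1
    rw [this]
    show lam.vtx 0 = lam.vtx (Fin.last 0)
    rw [h0]
  | succ m =>
    have h2 : p.1 m = lam.edge (Fin.last m) := hp.2 (Fin.last m)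
    rw [← p.2 m, h2]
    have := lam.src_eq (Fin.last m)
    rw [this]
    show lam.vtx (Fin.last m).succ = lam.vtx (Fin.last (m + 1))
    rw [Fin.succ_last]

lemma firstDiff_ge {ℓ : ℕ} {lam : FinPath k N A ℓ} {p q : PathSpace k N A}
    (hp : p ∈ Cyl lam) (hq : q ∈ Cyl lam) (hne : p ≠ q) :
    ℓ ≤ firstDiff p q ∧ {n | p.1 n ≠ q.1 n}.Nonempty := by
  have hne' : p.1 ≠ q.1 := fun h => hne (Subtype.ext h)
  have hnon : {n | p.1 n ≠ q.1 n}.Nonempty := Function.ne_iff.mp hne'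
  refine ⟨le_csInf hnon fun m hm => ?_, hnon⟩
  by_contra hlt
  push_neg at hlt
  exact hm ((hp.2 ⟨m, hlt⟩).trans (hq.2 ⟨m, hlt⟩).symm)

lemma distW_eq_wt_firstDiff {w : FB k N A → ℝ} {ℓ : ℕ} {lam : FinPath k N A ℓ}
    {p q : PathSpace k N A} (hp : p ∈ Cyl lam) (hq : q ∈ Cyl lam) (hne : p ≠ q) :
    distW w p q = w ⟨firstDiff p q, prefixPath p (firstDiff p q)⟩ := by
  have hrg : (p.1 0).rg = (q.1 0).rg := hp.1.trans hq.1.symm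
  rw [distW, if_neg hne, if_pos hrg]

lemma exists_edge_pair {ℓ : ℕ} {a : Fin N}
    (h2 : 2 ≤ ∑ b, A ((ℓ : Fin k)) a b) :
    ∃ e₁ e₂ : Edge k N A ℓ, e₁.rg = a ∧ e₂.rg = a ∧ e₁ ≠ e₂ := by
  have hcard : 1 < Fintype.card (Σ b : Fin N, Fin (A ((ℓ : Fin k)) a b)) := by
    simpa [Fintype.card_sigma, Nat.lt_iff_add_one_le] using h2
  obtain ⟨s, t, hst⟩ := Fintype.exists_pair_of_one_lt_card hcard
  refine ⟨⟨a, s.1, s.2⟩, ⟨a, t.1, t.2⟩, rfl, rfl, fun h => ?_⟩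
  apply hst
  have h' : (⟨a, s.1, s.2⟩ : Σ p : Fin N, Σ q : Fin N, Fin (A ((ℓ : Fin k)) p q))
      = ⟨a, t.1, t.2⟩ := congrArg (edgeEquiv ℓ) h
  have h2 : (⟨s.1, s.2⟩ : Σ q : Fin N, Fin (A ((ℓ : Fin k)) a q)) = ⟨t.1, t.2⟩ :=
    sigma_mk_injective (β := fun p => Σ q : Fin N, Fin (A ((ℓ : Fin k)) p q)) h'
  exact (Sigma.eta s).symm.trans (h2.trans (Sigma.eta t))

lemma edge_unique {ℓ : ℕ}
    (e₁ e₂ : Edge k N A ℓ) (he : e₁.rg = e₂.rg)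
    (h1 : ∑ b, A ((ℓ : Fin k)) e₁.rg b ≤ 1) : e₁ = e₂ := by
  obtain ⟨r₁, s₁, i₁⟩ := e₁
  obtain ⟨r₂, s₂, i₂⟩ := e₂
  have he' : r₁ = r₂ := he
  subst he'
  have h1' : ∑ b, A ((ℓ : Fin k)) r₁ b ≤ 1 := h1
  have hsub : Subsingleton (Σ b : Fin N, Fin (A ((ℓ : Fin k)) r₁ b)) :=
    Fintype.card_le_one_iff_subsingleton.mp (by simpa [Fintype.card_sigma] using h1')
  have hst : (⟨s₁, i₁⟩ : Σ b : Fin N, Fin (A ((ℓ : Fin k)) r₁ b)) = ⟨s₂, i₂⟩ :=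
    hsub.elim _ _
  rw [Sigma.mk.inj_iff] at hst
  obtain ⟨hs, hi⟩ := hst
  subst hs
  rw [eq_of_heq hi]

end Aux

/-- The weight `w_δ` equals the `d_δ`-diameter of every cylinder
set if and only if every row sum of every `A i` is at least `2`. -/
theorem statement18 (k N : ℕ) [NeZero k] [NeZero N]
    (A : Fin k → Matrix (Fin N) (Fin N) ℕ)
    (hcomm : ∀ i j, A i * A j = A j * A i)
    (hrow : ∀ (i : Fin k) (a : Fin N), ∃ b, 0 < A i a b)
    (hirr : IrreducibleFamily A)
    (ρ : Fin k → ℝ) (hρ : ∀ i, ρ i = specRad (A i))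
    (x : Fin N → ℝ) (hxpos : ∀ v, 0 < x v) (hxsum : ∑ v, x v = 1)
    (hxeig : ∀ i, ((A i).map (Nat.cast : ℕ → ℝ)).mulVec x = ρ i • x)
    (hρone : ∀ i, 1 < ρ i)
    (δ : ℝ) (hδ : δ ∈ Set.Ioo (0 : ℝ) 1) :
    (∀ (ℓ : ℕ) (lam : FinPath k N A ℓ),
        wt δ ρ x ⟨ℓ, lam⟩ =
          sSup { r : ℝ | ∃ p ∈ Cyl lam, ∃ q ∈ Cyl lam, distW (wt δ ρ x) p q = r })
      ↔ (∀ (i : Fin k) (a : Fin N), 2 ≤ ∑ b, A i a b) := by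
  obtain ⟨hδ0, hδ1⟩ := hδ
  have hδ' : δ ∈ Set.Ioo (0 : ℝ) 1 := ⟨hδ0, hδ1⟩
  have hρpos : ∀ i, 0 < ρ i := fun i => lt_trans one_pos (hρone i)
  constructor
  · -- diameter property implies row sums ≥ 2
    intro H i a
    by_contra h2
    push_neg at h2
    have h1 : ∑ b, A i a b ≤ 1 := by omega
    set ℓ : ℕ := (i : ℕ) with hℓ
    have hik : ((ℓ : ℕ) : Fin k) = i := Fin.cast_val_eq_self i
    obtain ⟨lam, hlam⟩ := exists_finpath_src (no_zero_col hcomm hrow hirr) a ℓ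
    have h1' : ∑ b, A ((ℓ : Fin k)) lam.src b ≤ 1 := by rw [hik, hlam]; exact h1
    set θ : ℝ := ρ i ^ ((1 : ℝ) - 1 / δ) with hθdef
    have hwpos := wt_pos (δ := δ) hρpos hxpos lam
    -- a point of the cylinder
    obtain ⟨b0, hb0⟩ := hrow ((ℓ : Fin k)) lam.src
    obtain ⟨p0, hp0, -⟩ := exists_mem_cyl_edge hrow lam ⟨lam.src, b0, ⟨0, hb0⟩⟩ rfl
    have h0mem : (0 : ℝ) ∈ { r : ℝ | ∃ p ∈ Cyl lam, ∃ q ∈ Cyl lam,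
        distW (wt δ ρ x) p q = r } := by
      refine ⟨p0, hp0, p0, hp0, ?_⟩
      rw [distW, if_pos rfl]
    have hub : ∀ r ∈ { r : ℝ | ∃ p ∈ Cyl lam, ∃ q ∈ Cyl lam,
        distW (wt δ ρ x) p q = r }, r ≤ θ * wt δ ρ x ⟨ℓ, lam⟩ := by
      rintro r ⟨p, hp, q, hq, rfl⟩
      have hθ0 : 0 ≤ θ := Real.rpow_nonneg (hρpos i).le _
      by_cases hpq : p = q
      · rw [distW, if_pos hpq]
        exact mul_nonneg hθ0 hwpos.le
      · rw [distW_eq_wt_firstDiff hp hq hpq]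
        obtain ⟨hge, hnon⟩ := firstDiff_ge hp hq hpq
        have hstep : ℓ + 1 ≤ firstDiff p q := by
          rcases Nat.lt_or_ge (firstDiff p q) (ℓ + 1) with hlt | hge'
          · exfalso
            have hfd : firstDiff p q = ℓ := by omega
            have hfdmem : p.1 (firstDiff p q) ≠ q.1 (firstDiff p q) :=
              Nat.sInf_mem hnon
            rw [hfd] at hfdmem
            exact hfdmem (edge_unique (p.1 ℓ) (q.1 ℓ)
              ((rg_level_eq hp).trans (rg_level_eq hq).symm)
              (by rw [rg_level_eq hp]; exact h1'))
          · exact hge'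
        calc wt δ ρ x ⟨firstDiff p q, prefixPath p (firstDiff p q)⟩
            ≤ wt δ ρ x ⟨ℓ + 1, prefixPath p (ℓ + 1)⟩ :=
              wt_prefix_mono hρone hxpos hxeig hδ' p hstep
          _ ≤ ρ ((ℓ : Fin k)) ^ ((1 : ℝ) - 1 / δ)
                * wt δ ρ x ⟨ℓ, prefixPath p ℓ⟩ :=
              wt_prefix_succ_le hρone hxpos hxeig hδ' p ℓ
          _ = θ * wt δ ρ x ⟨ℓ, lam⟩ := by
              rw [hik, wt_eq (prefixPath p ℓ), wt_eq lam, src_prefixPath,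
                rg_level_eq hp]
    have hsup : sSup { r : ℝ | ∃ p ∈ Cyl lam, ∃ q ∈ Cyl lam,
        distW (wt δ ρ x) p q = r } ≤ θ * wt δ ρ x ⟨ℓ, lam⟩ :=
      csSup_le ⟨0, h0mem⟩ hub
    have hw := H ℓ lam
    have hθ1 : θ < 1 := rpow_exp_lt_one (hρone i) hδ'
    rw [← hw] at hsup
    nlinarith
  · -- row sums ≥ 2 imply the diameter property
    intro H ℓ lam
    have hwpos := wt_pos (δ := δ) hρpos hxpos lam
    have hub : ∀ r ∈ { r : ℝ | ∃ p ∈ Cyl lam, ∃ q ∈ Cyl lam,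
        distW (wt δ ρ x) p q = r }, r ≤ wt δ ρ x ⟨ℓ, lam⟩ := by
      rintro r ⟨p, hp, q, hq, rfl⟩
      by_cases hpq : p = q
      · rw [distW, if_pos hpq]
        exact hwpos.le
      · rw [distW_eq_wt_firstDiff hp hq hpq]
        obtain ⟨hge, -⟩ := firstDiff_ge hp hq hpq
        calc wt δ ρ x ⟨firstDiff p q, prefixPath p (firstDiff p q)⟩
            ≤ wt δ ρ x ⟨ℓ, prefixPath p ℓ⟩ :=
              wt_prefix_mono hρone hxpos hxeig hδ' p hge
          _ = wt δ ρ x ⟨ℓ, lam⟩ := by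
              rw [wt_eq (prefixPath p ℓ), wt_eq lam, src_prefixPath,
                rg_level_eq hp]
    obtain ⟨e₁, e₂, h₁, h₂, hne⟩ :=
      exists_edge_pair (ℓ := ℓ) (a := lam.src) (H ((ℓ : Fin k)) lam.src)
    obtain ⟨p, hp, hpℓ⟩ := exists_mem_cyl_edge hrow lam e₁ h₁
    obtain ⟨q, hq, hqℓ⟩ := exists_mem_cyl_edge hrow lam e₂ h₂
    have hpq : p ≠ q := by
      intro h
      apply hne
      rw [← hpℓ, ← hqℓ, h]
    have hfd : firstDiff p q = ℓ :=
      le_antisymm (Nat.sInf_le (by rw [Set.mem_setOf_eq, hpℓ, hqℓ]; exact hne))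
        (firstDiff_ge hp hq hpq).1
    have hmem : wt δ ρ x ⟨ℓ, lam⟩ ∈ { r : ℝ | ∃ p ∈ Cyl lam, ∃ q ∈ Cyl lam,
        distW (wt δ ρ x) p q = r } := by
      refine ⟨p, hp, q, hq, ?_⟩
      rw [distW_eq_wt_firstDiff hp hq hpq, hfd, wt_eq (prefixPath p ℓ), wt_eq lam,
        src_prefixPath, rg_level_eq hp]
    exact le_antisymm (le_csSup ⟨_, hub⟩ hmem) (csSup_le ⟨_, hmem⟩ hub)

end KBratteli
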